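/- Let P be a finite partially ordered set and let x, y ∈ P be distinct elements such that y dominates x. Then the order complex Δ(P) LC-reduces to the order complex Δ(P \ {x}). -/
import Mathlib


open Finset Function

variable {V : Type} [Fintype V] [DecidableEq V]

/-- A collection of finite sets closed under taking subsets: an abstract simplicial
complex on its own vertex set. -/
def DownClosed (Δ : Finset (Finset V)) : Prop :=
  ∀ S ∈ Δ, ∀ T ⊆ S, T ∈ Δ

/-- The vertex set of a complex: those `v` with `{v}` a face. -/
def verts (Δ : Finset (Finset V)) : Finset V :=
  Finset.univ.filter fun v => ({v} : Finset V) ∈ Δ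

/-- `F` is a facet of `Δ`, i.e. a face maximal under inclusion. -/
def IsFacet (Δ : Finset (Finset V)) (F : Finset V) : Prop :=
  F ∈ Δ ∧ ∀ G ∈ Δ, F ⊆ G → F = G

/-- `F(v)`: the set of facets of `Δ` containing the vertex `v`. -/
def facetsOf (Δ : Finset (Finset V)) (v : V) : Set (Finset V) :=
  {F | IsFacet Δ F ∧ v ∈ F}

/-- `κ` restricts to a surjective `k`-linear coloring of the vertex set of `Δ`:
every color is used on some vertex of `Δ`, and vertices of `Δ` with the same color
have facet sets comparable by inclusion. -/
def IsLinearOn {k : ℕ} (Δ : Finset (Finset V)) (κ : V → Fin k) : Prop :=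
  (∀ i : Fin k, ∃ v ∈ verts Δ, κ v = i) ∧
  ∀ u ∈ verts Δ, ∀ v ∈ verts Δ, κ u = κ v →
    facetsOf Δ u ⊆ facetsOf Δ v ∨ facetsOf Δ v ⊆ facetsOf Δ u

/-- `Δ'` is a representative subcomplex of `Δ` with respect to the linear coloring `κ`
of `Δ`: `Δ'` is a subcomplex with exactly one vertex of each color, and whenever a
vertex `x` of `Δ` has the same color as a vertex `y` of `Δ'`, `F(x) ⊆ F(y)`. -/
def IsRepSub {k : ℕ} (Δ Δ' : Finset (Finset V)) (κ : V → Fin k) : Prop :=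
  Δ' ⊆ Δ ∧ DownClosed Δ' ∧ IsLinearOn Δ κ ∧
  (∀ i : Fin k, ∃! y : V, y ∈ verts Δ' ∧ κ y = i) ∧
  ∀ x ∈ verts Δ, ∀ y ∈ verts Δ', κ x = κ y → facetsOf Δ x ⊆ facetsOf Δ y

/-- `Δ` LC-reduces to `Δ'`: there is a chain of subcomplexes from `Δ` to `Δ'` in which
each term is a representative subcomplex of the previous one with respect to some
linear coloring. -/
def LCReduces (Δ Δ' : Finset (Finset V)) : Prop :=
  ∃ (t : ℕ) (c : ℕ → Finset (Finset V)), c 0 = Δ ∧ c t = Δ' ∧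
    ∀ r < t, ∃ (k : ℕ) (κ : V → Fin k), IsRepSub (c r) (c (r + 1)) κ

open scoped Classical in
/-- The order complex of the subset `A` of a finite poset: its faces are the
finite chains contained in `A`. -/
noncomputable def orderCpx {P : Type} [Fintype P] [DecidableEq P] [PartialOrder P]
    (A : Finset P) : Finset (Finset P) :=
  A.powerset.filter fun S => IsChain (· ≤ ·) (S : Set P)

/-- If `y` dominates `x` in a finite poset `P`, then the order complex of `P`
LC-reduces to the order complex of `P \ {x}`. -/
theorem stmt_16 {P : Type} [Fintype P] [DecidableEq P] [PartialOrder P]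
    (x y : P) (hxy : x ≠ y)
    (hdom : ∀ z : P, (z ≤ x ∨ x ≤ z) → (z ≤ y ∨ y ≤ z)) :
    LCReduces (orderCpx (Finset.univ : Finset P))
      (orderCpx ((Finset.univ : Finset P).erase x)) := by
  classical
  set Δ := orderCpx (Finset.univ : Finset P) with hΔ
  set Δ' := orderCpx ((Finset.univ : Finset P).erase x) with hΔ'
  have hmemΔ : ∀ S : Finset P, S ∈ Δ ↔ IsChain (· ≤ ·) (S : Set P) := by
    intro S; simp [hΔ, orderCpx]
  have hmemΔ' : ∀ S : Finset P, S ∈ Δ' ↔ S ⊆ Finset.univ.erase x ∧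
      IsChain (· ≤ ·) (S : Set P) := by
    intro S; simp [hΔ', orderCpx]
  have hvΔ : ∀ v : P, v ∈ verts Δ := by
    intro v
    simp only [verts, Finset.mem_filter, Finset.mem_univ, true_and]
    rw [hmemΔ]
    simp [Set.Subsingleton.isChain, Set.subsingleton_singleton]
  have hvΔ' : ∀ v : P, v ∈ verts Δ' ↔ v ≠ x := by
    intro v
    simp only [verts, Finset.mem_filter, Finset.mem_univ, true_and]
    rw [hmemΔ']
    constructor
    · rintro ⟨h, -⟩
      have := h (Finset.mem_singleton_self v)
      exact (Finset.mem_erase.mp this).1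
    · intro hv
      refine ⟨?_, ?_⟩
      · intro a ha
        rw [Finset.mem_singleton] at ha; subst ha
        exact Finset.mem_erase.mpr ⟨hv, Finset.mem_univ _⟩
      · simp [Set.Subsingleton.isChain, Set.subsingleton_singleton]
  -- key lemma: every facet containing x also contains y
  have hkey : facetsOf Δ x ⊆ facetsOf Δ y := by
    rintro F ⟨⟨hFmem, hFmax⟩, hxF⟩
    have hchain : IsChain (· ≤ ·) (F : Set P) := (hmemΔ F).mp hFmem
    have hins : IsChain (· ≤ ·) ((insert y F : Finset P) : Set P) := by
      rw [Finset.coe_insert]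
      refine hchain.insert ?_
      intro z hz _
      have hzx : z ≤ x ∨ x ≤ z := by
        rcases eq_or_ne z x with rfl | h
        · exact Or.inl le_rfl
        · exact hchain hz hxF h
      rcases hdom z hzx with h | h
      · exact Or.inr h
      · exact Or.inl h
    have hmem : insert y F ∈ Δ := (hmemΔ _).mpr hins
    have hFeq := hFmax _ hmem (Finset.subset_insert _ _)
    refine ⟨⟨hFmem, hFmax⟩, ?_⟩
    rw [hFeq]; exact Finset.mem_insert_self _ _
  -- the coloring
  set S : Finset P := Finset.univ.erase x with hS
  have hyS : y ∈ S := Finset.mem_erase.mpr ⟨hxy.symm, Finset.mem_univ _⟩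
  set k : ℕ := S.card with hk
  set e : S ≃ Fin k := S.equivFin with he
  set f : P → S := fun p => if h : p = x then ⟨y, hyS⟩ else
      ⟨p, Finset.mem_erase.mpr ⟨h, Finset.mem_univ _⟩⟩ with hf
  set κ : P → Fin k := fun p => e (f p) with hκ
  have hfS : ∀ p : P, p ≠ x → (f p : P) = p := by
    intro p hp; simp [hf, hp]
  have hfx : (f x : P) = y := by simp [hf]
  have hfinj : ∀ u v : P, f u = f v → u = v ∨ (u = x ∧ v = y) ∨ (u = y ∧ v = x) := by
    intro u v h
    rcases eq_or_ne u x with hu | hu <;> rcases eq_or_ne v x with hv | hv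
    · exact Or.inl (hu.trans hv.symm)
    · refine Or.inr (Or.inl ⟨hu, ?_⟩)
      have h2 := congrArg Subtype.val h
      rw [hu, hfx, hfS v hv] at h2
      exact h2.symm
    · refine Or.inr (Or.inr ⟨?_, hv⟩)
      have h2 := congrArg Subtype.val h
      rw [hv, hfx, hfS u hu] at h2
      exact h2
    · left
      have h2 := congrArg Subtype.val h
      rwa [hfS u hu, hfS v hv] at h2
  have hκinj : ∀ u v : P, κ u = κ v →
      u = v ∨ (u = x ∧ v = y) ∨ (u = y ∧ v = x) := by
    intro u v h
    exact hfinj u v (e.injective h)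
  refine ⟨1, fun r => if r = 0 then Δ else Δ', by simp, by simp, ?_⟩
  intro r hr
  interval_cases r
  show ∃ (k : ℕ) (κ : P → Fin k), IsRepSub Δ Δ' κ
  refine ⟨k, κ, ?_, ?_, ⟨?_, ?_⟩, ?_, ?_⟩
  · -- Δ' ⊆ Δ
    intro T hT
    exact (hmemΔ T).mpr ((hmemΔ' T).mp hT).2
  · -- DownClosed Δ'
    intro T hT U hU
    obtain ⟨h1, h2⟩ := (hmemΔ' T).mp hT
    exact (hmemΔ' U).mpr ⟨hU.trans h1, h2.mono (by exact_mod_cast hU)⟩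
  · -- surjective
    intro i
    refine ⟨(e.symm i : P), hvΔ _, ?_⟩
    have hne : ((e.symm i : S) : P) ≠ x :=
      fun h => absurd (h ▸ (e.symm i).2) (by simp [hS])
    have : f ((e.symm i : S) : P) = e.symm i := Subtype.ext (hfS _ hne)
    simp [hκ, this]
  · -- linear
    intro u _ v _ huv
    rcases hκinj u v huv with rfl | ⟨rfl, rfl⟩ | ⟨rfl, rfl⟩
    · exact Or.inl (le_refl _)
    · exact Or.inl hkey
    · exact Or.inr hkey
  · -- unique vertex of each color
    intro i
    refine ⟨(e.symm i : P), ⟨?_, ?_⟩, ?_⟩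
    · rw [hvΔ']
      exact fun h => absurd (h ▸ (e.symm i).2) (by simp [hS])
    · have hne : ((e.symm i : S) : P) ≠ x :=
        fun h => absurd (h ▸ (e.symm i).2) (by simp [hS])
      have : f ((e.symm i : S) : P) = e.symm i := Subtype.ext (hfS _ hne)
      simp [hκ, this]
    · rintro z ⟨hz, hzi⟩
      rw [hvΔ'] at hz
      have hfz : f z = ⟨z, Finset.mem_erase.mpr ⟨hz, Finset.mem_univ _⟩⟩ :=
        Subtype.ext (hfS z hz)
      have heq : e (f z) = i := hzi
      rw [hfz] at heq
      have := congrArg (fun j => ((e.symm j : S) : P)) heq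
      simpa using this
  · -- representative condition
    intro u _ v hv huv
    rw [hvΔ'] at hv
    rcases hκinj u v huv with rfl | ⟨rfl, rfl⟩ | ⟨rfl, h2⟩
    · exact le_refl _
    · exact hkey
    · exact absurd h2 hv
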